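/- Suppose 𝒬 ⊆ 𝒫(Θ) allows for Dirac measures, D(Q,Π) ≤ M for all Q ∈ 𝒬, and the losses (L_n) are measurable, bounded below, lower semicontinuous and coercive with L_n → L pointwise, L lower semicontinuous, and inf_Θ L ≥ limsup_n inf_Θ L_n > −∞. For each n let Q_n minimise T_n(Q) = n·J_{L_n}(Q) + (1/β)·D(Q,Π) over 𝒬. If A ⊆ Θ is measurable with inf_A L > inf_Θ L and liminf_n inf_A L_n > inf_Θ L, then Q_n(A) → 0 as n → ∞. -/

import Mathlib

open MeasureTheory Filter Topology
open scoped ENNReal NNReal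

/-- The loss functional `J_f(ν) := ∫ f dν`, valued in the extended reals; for `f`
bounded below it takes values in `(-∞, ∞]`. -/
noncomputable def J {Θ : Type*} [MeasurableSpace Θ] (f : Θ → ℝ) (ν : Measure Θ) : EReal :=
  ((∫⁻ θ, ENNReal.ofReal (f θ) ∂ν : ℝ≥0∞) : EReal) -
    ((∫⁻ θ, ENNReal.ofReal (-f θ) ∂ν : ℝ≥0∞) : EReal)

/-- The GVI objective `T n β L D Π Q := n · J_L(Q) + (1/β) · D(Q, Π)`. -/
noncomputable def T {Θ : Type*} [MeasurableSpace Θ] (n : ℕ) (β : ℝ) (L : Θ → ℝ)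
    (D : ProbabilityMeasure Θ → ProbabilityMeasure Θ → ℝ)
    (prior Q : ProbabilityMeasure Θ) : EReal :=
  ((n : ℝ) : EReal) * J L (Q : Measure Θ) + ((1 / β * D Q prior : ℝ) : EReal)

/-- `f : Θ → ℝ` is coercive if for every `c` there is a compact set outside of which `f > c`. -/
def Coercive {Θ : Type*} [TopologicalSpace Θ] (f : Θ → ℝ) : Prop :=
  ∀ c : ℝ, ∃ K : Set Θ, IsCompact K ∧ ∀ θ ∉ K, c < f θ

/-- The mixture `a·μ + (1−a)·ν` of two probability measures. -/
noncomputable def mix {Θ : Type*} [MeasurableSpace Θ] (μ ν : ProbabilityMeasure Θ) (a : ℝ)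
    (ha0 : 0 ≤ a) (ha1 : a ≤ 1) : ProbabilityMeasure Θ :=
  ⟨ENNReal.ofReal a • (μ : Measure Θ) + ENNReal.ofReal (1 - a) • (ν : Measure Θ), by
    constructor
    simp only [Measure.coe_add, Pi.add_apply, Measure.smul_apply, smul_eq_mul, measure_univ,
      mul_one]
    rw [← ENNReal.ofReal_add ha0 (by linarith)]
    norm_num⟩

/-- The Dirac probability measure at `θ`. -/
noncomputable def diracProb {Θ : Type*} [MeasurableSpace Θ] (θ : Θ) : ProbabilityMeasure Θ :=
  ⟨Measure.dirac θ, inferInstance⟩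

/-- `𝒬` allows for Dirac measures: it is weak*-closed and the infimum of `J_f` over `𝒬`
equals the infimum of `f` over `Θ`, for every bounded below, lsc, coercive `f`. -/
def AllowsDiracs {Θ : Type*} [MeasurableSpace Θ] [TopologicalSpace Θ] [OpensMeasurableSpace Θ]
    (𝒬 : Set (ProbabilityMeasure Θ)) : Prop :=
  IsClosed 𝒬 ∧ ∀ f : Θ → ℝ, (∃ b, ∀ θ, b ≤ f θ) → LowerSemicontinuous f → Coercive f →
    (⨅ ν : 𝒬, J f (ν.1 : Measure Θ)) = ((⨅ θ, f θ : ℝ) : EReal)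

section aux
variable {Θ : Type*} [MeasurableSpace Θ]

lemma negpart_lt_top {f : Θ → ℝ} {b : ℝ} (hb : ∀ θ, b ≤ f θ) (ν : Measure Θ)
    [IsProbabilityMeasure ν] : (∫⁻ θ, ENNReal.ofReal (-f θ) ∂ν) < ⊤ := by
  calc (∫⁻ θ, ENNReal.ofReal (-f θ) ∂ν) ≤ ∫⁻ _, ENNReal.ofReal (-b) ∂ν :=
        lintegral_mono fun θ => ENNReal.ofReal_le_ofReal (by linarith [hb θ])
    _ = ENNReal.ofReal (-b) := by simp
    _ < ⊤ := ENNReal.ofReal_lt_top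

lemma coe_ennreal_eq {p : ℝ≥0∞} (hp : p ≠ ⊤) : (p : EReal) = ((p.toReal : ℝ) : EReal) := by
  conv_lhs => rw [← ENNReal.ofReal_toReal hp]
  rw [EReal.coe_ennreal_ofReal, max_eq_left ENNReal.toReal_nonneg]

lemma J_eq_integral {f : Θ → ℝ} (hm : Measurable f) {b : ℝ} (hb : ∀ θ, b ≤ f θ)
    (ν : Measure Θ) [IsProbabilityMeasure ν] (hfin : J f ν ≠ ⊤) :
    Integrable f ν ∧ J f ν = ((∫ θ, f θ ∂ν : ℝ) : EReal) := by
  have hN := (negpart_lt_top hb ν).ne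
  have hP : (∫⁻ θ, ENNReal.ofReal (f θ) ∂ν) ≠ ⊤ := by
    intro h
    rw [J, h, EReal.coe_ennreal_top, coe_ennreal_eq hN, EReal.top_sub_coe] at hfin
    exact hfin rfl
  have hint : Integrable f ν := by
    refine ⟨hm.aestronglyMeasurable, ?_⟩
    rw [hasFiniteIntegral_iff_norm]
    have heq : ∀ θ, ENNReal.ofReal ‖f θ‖ = ENNReal.ofReal (f θ) + ENNReal.ofReal (-f θ) := by
      intro θ
      rcases le_or_gt 0 (f θ) with h | h
      · rw [Real.norm_of_nonneg h]
        have : ENNReal.ofReal (-f θ) = 0 := ENNReal.ofReal_of_nonpos (by linarith)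
        rw [this, add_zero]
      · rw [Real.norm_of_nonpos h.le, ENNReal.ofReal_of_nonpos h.le, zero_add]
    calc (∫⁻ θ, ENNReal.ofReal ‖f θ‖ ∂ν)
        = ∫⁻ θ, (ENNReal.ofReal (f θ) + ENNReal.ofReal (-f θ)) ∂ν := lintegral_congr heq
      _ = (∫⁻ θ, ENNReal.ofReal (f θ) ∂ν) + ∫⁻ θ, ENNReal.ofReal (-f θ) ∂ν :=
          lintegral_add_left hm.ennreal_ofReal _
      _ < ⊤ := by rw [ENNReal.add_lt_top]; exact ⟨hP.lt_top, hN.lt_top⟩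
  refine ⟨hint, ?_⟩
  rw [J, coe_ennreal_eq hN, coe_ennreal_eq hP,
    integral_eq_lintegral_pos_part_sub_lintegral_neg_part hint, EReal.coe_sub]

end aux

/-- Key per-`n` bound: `n · (inf_A f − inf_Θ f) · Q₀(A) ≤ M/β` for a minimiser `Q₀`. -/
lemma key_bound {Θ : Type*} [TopologicalSpace Θ] [MeasurableSpace Θ] [OpensMeasurableSpace Θ]
    [Nonempty Θ] (𝒬 : Set (ProbabilityMeasure Θ))
    (hdirac : ∀ f : Θ → ℝ, (∃ b, ∀ θ, b ≤ f θ) → LowerSemicontinuous f → Coercive f →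
      (⨅ ν : 𝒬, J f (ν.1 : Measure Θ)) = ((⨅ θ, f θ : ℝ) : EReal))
    (f : Θ → ℝ) (hm : Measurable f) {b : ℝ} (hb : ∀ θ, b ≤ f θ)
    (hlsc : LowerSemicontinuous f) (hcoer : Coercive f)
    (D : ProbabilityMeasure Θ → ProbabilityMeasure Θ → ℝ)
    (hDnn : ∀ P Q : ProbabilityMeasure Θ, 0 ≤ D P Q)
    (Pr : ProbabilityMeasure Θ) (M β : ℝ) (hβ : 0 < β)
    (hDbdd : ∀ Q ∈ 𝒬, D Q Pr ≤ M)
    (n : ℕ) (hn : 1 ≤ n) (Q0 : ProbabilityMeasure Θ) (hQ0 : Q0 ∈ 𝒬)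
    (hmin : ∀ Q ∈ 𝒬, T n β f D Pr Q0 ≤ T n β f D Pr Q)
    (A : Set Θ) (hA : MeasurableSet A) :
    (n : ℝ) * (((⨅ θ : A, f (θ : Θ)) - ⨅ θ : Θ, f θ) * ((Q0 A : ℝ≥0) : ℝ)) ≤ M / β := by
  set c : ℝ := ⨅ θ : Θ, f θ with hc
  set a : ℝ := ⨅ θ : A, f (θ : Θ) with ha
  set p : ℝ := ((Q0 A : ℝ≥0) : ℝ) with hpdef
  have hn0 : (0:ℝ) < (n:ℝ) := by exact_mod_cast hn
  have hc_le : ∀ θ : Θ, c ≤ f θ := fun θ =>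
    ciInf_le ⟨b, by rintro x ⟨θ', rfl⟩; exact hb θ'⟩ θ
  have ha_le : ∀ θ ∈ A, a ≤ f θ := fun θ hθ =>
    ciInf_le ⟨b, by rintro x ⟨θ', rfl⟩; exact hb θ'⟩ (⟨θ, hθ⟩ : A)
  refine le_of_forall_pos_le_add fun ε hε => ?_
  -- choose a near-optimal Q in 𝒬
  have hiInf := hdirac f ⟨b, hb⟩ hlsc hcoer
  have hlt : (⨅ ν : 𝒬, J f (ν.1 : Measure Θ)) < ((c + ε / n : ℝ) : EReal) := by
    rw [hiInf]
    have := div_pos hε hn0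
    exact_mod_cast (by linarith : (⨅ θ : Θ, f θ) < c + ε / n)
  obtain ⟨⟨Q, hQmem⟩, hQlt⟩ := iInf_lt_iff.mp hlt
  have hQtop : J f (Q : Measure Θ) ≠ ⊤ := (hQlt.trans (EReal.coe_lt_top _)).ne
  obtain ⟨hQint, hQJ⟩ := J_eq_integral hm hb (Q : Measure Θ) hQtop
  have hQval : (∫ θ, f θ ∂(Q : Measure Θ)) < c + ε / n := by
    rw [hQJ] at hQlt; exact_mod_cast hQlt
  -- minimality
  have hTmin := hmin Q hQmem
  have h1 : ((n : ℝ) : EReal) * J f (Q0 : Measure Θ) ≤ T n β f D Pr Q0 := by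
    rw [T]
    nth_rewrite 1 [← add_zero (((n : ℝ) : EReal) * J f (Q0 : Measure Θ))]
    exact add_le_add (le_refl _) (by exact_mod_cast mul_nonneg (by positivity) (hDnn Q0 Pr))
  have h2 : T n β f D Pr Q ≤ (((n : ℝ) * (∫ θ, f θ ∂(Q : Measure Θ)) + 1/β * D Q Pr : ℝ) : EReal) := by
    rw [T, hQJ, ← EReal.coe_mul, ← EReal.coe_add]
  have hchain : ((n : ℝ) : EReal) * J f (Q0 : Measure Θ) ≤
      (((n : ℝ) * (∫ θ, f θ ∂(Q : Measure Θ)) + 1/β * D Q Pr : ℝ) : EReal) :=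
    h1.trans (hTmin.trans h2)
  have hJ0top : J f (Q0 : Measure Θ) ≠ ⊤ := by
    intro htop
    rw [htop, EReal.coe_mul_top_of_pos (by exact_mod_cast hn0)] at hchain
    exact (EReal.coe_lt_top _).not_ge hchain
  obtain ⟨h0int, h0J⟩ := J_eq_integral hm hb (Q0 : Measure Θ) hJ0top
  have hreal : (n : ℝ) * (∫ θ, f θ ∂(Q0 : Measure Θ)) ≤
      (n : ℝ) * (∫ θ, f θ ∂(Q : Measure Θ)) + 1/β * D Q Pr := by
    rw [h0J, ← EReal.coe_mul] at hchain
    exact_mod_cast hchain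
  -- lower bound for the integral over Q0
  set q : ℝ := ((Q0 : Measure Θ) Aᶜ).toReal with hqdef
  have hptoReal : ((Q0 : Measure Θ) A).toReal = p := rfl
  have hpq : p + q = 1 := by
    have := measure_add_measure_compl (μ := (Q0 : Measure Θ)) hA
    have h' := congrArg ENNReal.toReal this
    rw [ENNReal.toReal_add (measure_ne_top _ _) (measure_ne_top _ _)] at h'
    simpa [hptoReal] using h'
  have hlow1 : a * p ≤ ∫ θ in A, f θ ∂(Q0 : Measure Θ) := by
    have := setIntegral_ge_of_const_le_real hA (measure_ne_top _ _) ha_le h0int.integrableOn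
    exact this
  have hlow2 : c * q ≤ ∫ θ in Aᶜ, f θ ∂(Q0 : Measure Θ) := by
    have := setIntegral_ge_of_const_le_real hA.compl (measure_ne_top _ _)
      (fun θ _ => hc_le θ) h0int.integrableOn
    exact this
  have hsplit : (∫ θ in A, f θ ∂(Q0 : Measure Θ)) + ∫ θ in Aᶜ, f θ ∂(Q0 : Measure Θ) =
      ∫ θ, f θ ∂(Q0 : Measure Θ) := integral_add_compl hA h0int
  have hlow : a * p + c * q ≤ ∫ θ, f θ ∂(Q0 : Measure Θ) := by
    rw [← hsplit]; exact add_le_add hlow1 hlow2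
  -- combine
  have hDQ : D Q Pr ≤ M := hDbdd Q hQmem
  have hup : (n : ℝ) * (∫ θ, f θ ∂(Q0 : Measure Θ)) ≤ (n : ℝ) * c + ε + M / β := by
    have h3 : (n : ℝ) * (∫ θ, f θ ∂(Q : Measure Θ)) ≤ (n:ℝ) * (c + ε / n) :=
      mul_le_mul_of_nonneg_left hQval.le hn0.le
    have h4 : (n:ℝ) * (c + ε / n) = (n:ℝ) * c + ε := by field_simp
    have h5 : 1/β * D Q Pr ≤ M / β := by
      rw [div_eq_mul_inv M β, mul_comm M β⁻¹, ← one_div]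
      exact mul_le_mul_of_nonneg_left hDQ (by positivity)
    linarith
  have hF1 : (n:ℝ) * (a * p + c * q) ≤ (n:ℝ) * (∫ θ, f θ ∂(Q0 : Measure Θ)) :=
    mul_le_mul_of_nonneg_left hlow hn0.le
  have hq : q = 1 - p := by linarith
  have hkey : (n:ℝ) * (a * p + c * q) = (n:ℝ) * ((a - c) * p) + (n:ℝ) * c := by
    rw [hq]; ring
  linarith

/-- Theorem: asymptotic consistency: If `𝒬` allows for Dirac measures, the
divergence is bounded by `M` on `𝒬`, the losses converge pointwise to a lsc limit `L∞` with
`inf_Θ L∞ ≥ limsup_n inf_Θ L_n > −∞`, and `Q n` minimises `T_n` over `𝒬`, then for every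
measurable `A` with `inf_A L∞ > inf_Θ L∞` and `liminf_n inf_A L_n > inf_Θ L∞`,
`Q n (A) → 0`. -/
theorem gvi_asymptotic_consistency {Θ : Type*} [TopologicalSpace Θ] [PolishSpace Θ]
    [MeasurableSpace Θ] [BorelSpace Θ] [Nonempty Θ]
    (𝒬 : Set (ProbabilityMeasure Θ)) (h𝒬 : AllowsDiracs 𝒬)
    (L : ℕ → Θ → ℝ) (Llim : Θ → ℝ)
    (hmeas : ∀ n, Measurable (L n)) (hbdd : ∀ n, ∃ b : ℝ, ∀ θ, b ≤ L n θ)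
    (hlsc : ∀ n, LowerSemicontinuous (L n)) (hcoer : ∀ n, Coercive (L n))
    (hLlimlsc : LowerSemicontinuous Llim)
    (hconv : ∀ θ : Θ, Tendsto (fun n => L n θ) atTop (nhds (Llim θ)))
    (hinf1 : Filter.limsup (fun n => ((⨅ θ : Θ, L n θ : ℝ) : EReal)) atTop ≤
      ((⨅ θ : Θ, Llim θ : ℝ) : EReal))
    (hinf2 : (⊥ : EReal) < Filter.limsup (fun n => ((⨅ θ : Θ, L n θ : ℝ) : EReal)) atTop)
    (D : ProbabilityMeasure Θ → ProbabilityMeasure Θ → ℝ)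
    (hDnn : ∀ P Q : ProbabilityMeasure Θ, 0 ≤ D P Q)
    (Pr : ProbabilityMeasure Θ) (M β : ℝ) (hM : 0 < M) (hβ : 0 < β)
    (hDbdd : ∀ Q ∈ 𝒬, D Q Pr ≤ M)
    (Qn : ℕ → ProbabilityMeasure Θ)
    (hQn : ∀ n, Qn n ∈ 𝒬 ∧ ∀ Q ∈ 𝒬, T n β (L n) D Pr (Qn n) ≤ T n β (L n) D Pr Q)
    (A : Set Θ) (hA : MeasurableSet A)
    (hAinf : (⨅ θ : Θ, Llim θ) < ⨅ θ : A, Llim (θ : Θ))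
    (hAliminf : ((⨅ θ : Θ, Llim θ : ℝ) : EReal) <
      Filter.liminf (fun n => ((⨅ θ : A, L n (θ : Θ) : ℝ) : EReal)) atTop) :
    Tendsto (fun n => ((Qn n) A : ℝ)) atTop (nhds 0) := by
  rcases A.eq_empty_or_nonempty with rfl | hAne
  · have h0 : (fun n => ((Qn n) (∅ : Set Θ) : ℝ)) = fun _ => 0 := by
      funext n
      simp [ProbabilityMeasure.coeFn_def]
    rw [h0]
    exact tendsto_const_nhds
  obtain ⟨hclosed, hdirac⟩ := h𝒬
  set m : ℝ := ⨅ θ : Θ, Llim θ with hm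
  obtain ⟨u, hmu, hult⟩ := EReal.exists_between_coe_real hAliminf
  have hmu' : m < u := by exact_mod_cast hmu
  set s : ℝ := (m + u) / 2 with hs
  have hsu : s < u := by rw [hs]; linarith
  have hms : m < s := by rw [hs]; linarith
  set δ : ℝ := u - s with hδ
  have hδ0 : (0:ℝ) < δ := by rw [hδ]; linarith
  set C : ℝ := M / (β * δ) with hC
  have hev1 : ∀ᶠ n in atTop, u < ⨅ θ : A, L n (θ : Θ) := by
    filter_upwards [eventually_lt_of_lt_liminf hult] with n h
    exact_mod_cast h
  have hev2 : ∀ᶠ n in atTop, (⨅ θ : Θ, L n θ) < s := by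
    have hlt : Filter.limsup (fun n => ((⨅ θ : Θ, L n θ : ℝ) : EReal)) atTop < ((s:ℝ) : EReal) :=
      lt_of_le_of_lt hinf1 (by exact_mod_cast hms)
    filter_upwards [eventually_lt_of_limsup_lt hlt] with n h
    exact_mod_cast h
  have hbound : ∀ᶠ n in atTop, ((Qn n) A : ℝ) ≤ C / n := by
    filter_upwards [hev1, hev2, eventually_ge_atTop 1] with n h1 h2 hn1
    have hn0 : (0:ℝ) < (n:ℝ) := by exact_mod_cast hn1
    have hkey := key_bound 𝒬 hdirac (L n) (hmeas n) (hbdd n).choose_spec (hlsc n) (hcoer n)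
      D hDnn Pr M β hβ hDbdd n hn1 (Qn n) (hQn n).1 (hQn n).2 A hA
    set p : ℝ := ((Qn n) A : ℝ) with hp
    have hp0 : 0 ≤ p := NNReal.coe_nonneg _
    have hgap : δ ≤ (⨅ θ : A, L n (θ : Θ)) - ⨅ θ : Θ, L n θ := by
      rw [hδ]; linarith
    rw [hC, div_div, le_div_iff₀ (by positivity)]
    have hkey2 : β * ((n:ℝ) * (((⨅ θ : A, L n (θ : Θ)) - ⨅ θ : Θ, L n θ) * p)) ≤ M := by
      have := mul_le_mul_of_nonneg_left hkey hβ.le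
      calc β * ((n:ℝ) * (((⨅ θ : A, L n (θ : Θ)) - ⨅ θ : Θ, L n θ) * p)) ≤ β * (M / β) := this
        _ = M := by field_simp
    nlinarith [mul_nonneg (mul_nonneg hβ.le hn0.le) hp0,
      mul_nonneg (mul_nonneg (mul_nonneg hβ.le hn0.le) hp0) (sub_nonneg.mpr hgap)]
  have hnonneg : ∀ᶠ n in atTop, (0:ℝ) ≤ ((Qn n) A : ℝ) :=
    Filter.Eventually.of_forall fun n => NNReal.coe_nonneg _
  exact squeeze_zero' hnonneg hbound (tendsto_const_div_atTop_nhds_zero_nat C)
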